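/- Let p, q be coprime integers, not both zero. Then gcd(pq, q² − pq, p² − pq) = 1, and, setting m = p² − pq + q² (so m ≥ 1), the point (pq/m, (q²−pq)/m, (p²−pq)/m) is a rational point of 𝐒¹_III = {(x₀,x₁,x₂) ∈ ℝ³ : x₀+x₁+x₂ = 1, x₀²+x₁²+x₂² = 1} of height m = p² − pq + q². -/

import Mathlib

/-- Points of `ℝ^l` with all coordinates rational. -/
def ratPts (l : ℕ) : Set (EuclideanSpace ℝ (Fin l)) := {v | ∀ i, ∃ q : ℚ, v i = (q : ℝ)}

/-- The height of a rational point of a sphere: writing it as `𝐩/q` with `𝐩 ∈ ℤ^l`,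
`q ≥ 1`, `gcd(p₁,…,p_l,q) = 1`, the height is `q`, which equals the lcm of the
denominators of the rational coordinates. -/
noncomputable def heightVec {l : ℕ} (v : EuclideanSpace ℝ (Fin l)) : ℝ :=
  letI := Classical.dec (∀ i, ∃ q : ℚ, v i = (q : ℝ))
  if h : ∀ i, ∃ q : ℚ, v i = (q : ℝ) then
    ((Finset.univ.lcm fun i => (h i).choose.den : ℕ) : ℝ)
  else 1

/-- The circle `𝐒¹_III = {(x₀,x₁,x₂) ∈ ℝ³ : x₀+x₁+x₂ = 1, x₀²+x₁²+x₂² = 1}`. -/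
def S1III : Set (EuclideanSpace ℝ (Fin 3)) :=
  {v | v 0 + v 1 + v 2 = 1 ∧ v 0 ^ 2 + v 1 ^ 2 + v 2 ^ 2 = 1}


lemma den_div_int (a m : ℤ) (hm : 0 < m) :
    (((a : ℚ) / (m : ℚ)).den : ℤ) ∣ m ∧
    m / ((((a : ℚ) / (m : ℚ)).den : ℤ)) ∣ a := by
  set r : ℚ := (a : ℚ) / (m : ℚ) with hr
  have hrd : r = Rat.divInt a m := by rw [hr, Rat.divInt_eq_div]
  have hden : ((r.den : ℤ)) ∣ m := by rw [hrd]; exact Rat.den_dvd a m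
  refine ⟨hden, ?_⟩
  obtain ⟨c, hc⟩ := hden
  have hdpos : (0:ℤ) < r.den := by exact_mod_cast r.pos
  have hcross : r.num * m = a * r.den := by
    have h1 : (r.num : ℚ) / (r.den : ℚ) = (a : ℚ) / (m : ℚ) := by
      rw [Rat.num_div_den]
    have hm0 : (m : ℚ) ≠ 0 := by exact_mod_cast hm.ne'
    have hd0 : ((r.den : ℤ) : ℚ) ≠ 0 := by exact_mod_cast hdpos.ne'
    field_simp at h1
    rw [mul_comm a]; exact_mod_cast h1
  have hquot : m / (r.den : ℤ) = c := by rw [hc]; exact Int.mul_ediv_cancel_left _ hdpos.ne'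
  rw [hquot]
  have : a = r.num * c := by
    have h2 : r.num * ((r.den : ℤ) * c) = a * r.den := by rw [← hc]; exact hcross
    have h3 : (r.den : ℤ) * (r.num * c) = (r.den : ℤ) * a := by ring_nf; ring_nf at h2; linarith
    exact (mul_left_cancel₀ hdpos.ne' h3).symm
  exact ⟨r.num, by rw [this]; ring⟩

lemma lcm_dens (a0 a1 a2 m : ℤ) (hm : 0 < m)
    (hg : Int.gcd (Int.gcd a0 a1) a2 = 1) :
    (Nat.lcm (((a0 : ℚ) / (m : ℚ)).den)
      (Nat.lcm (((a1 : ℚ) / (m : ℚ)).den) (((a2 : ℚ) / (m : ℚ)).den)) : ℤ) = m := by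
  set d0 := (((a0 : ℚ) / (m : ℚ)).den) with hd0
  set d1 := (((a1 : ℚ) / (m : ℚ)).den) with hd1
  set d2 := (((a2 : ℚ) / (m : ℚ)).den) with hd2
  obtain ⟨h0d, h0c⟩ := den_div_int a0 m hm
  obtain ⟨h1d, h1c⟩ := den_div_int a1 m hm
  obtain ⟨h2d, h2c⟩ := den_div_int a2 m hm
  set L : ℕ := Nat.lcm d0 (Nat.lcm d1 d2) with hL
  have hmabs : (m.natAbs : ℤ) = m := Int.natAbs_of_nonneg hm.le
  have hdvdN : ∀ d : ℕ, ((d : ℤ) ∣ m) → d ∣ m.natAbs := by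
    intro d hd
    rw [← Int.natCast_dvd_natCast, hmabs]; exact hd
  have hLm : (L : ℤ) ∣ m := by
    rw [← hmabs, Int.natCast_dvd_natCast]
    exact Nat.lcm_dvd (hdvdN _ h0d) (Nat.lcm_dvd (hdvdN _ h1d) (hdvdN _ h2d))
  obtain ⟨k, hk⟩ := hLm
  have hLpos : (0:ℤ) < (L : ℤ) := by
    have : 0 < L := Nat.pos_of_ne_zero (by
      have e0 := (Rat.den_pos ((a0:ℚ)/(m:ℚ))).ne'
      have e1 := (Rat.den_pos ((a1:ℚ)/(m:ℚ))).ne'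
      have e2 := (Rat.den_pos ((a2:ℚ)/(m:ℚ))).ne'
      exact Nat.lcm_ne_zero e0 (Nat.lcm_ne_zero e1 e2))
    exact_mod_cast this
  have hkpos : 0 < k := by nlinarith
  -- k divides each m / d_i
  have key : ∀ d : ℕ, (d : ℤ) ∣ m → d ∣ L → k ∣ m / (d : ℤ) := by
    intro d hdm hdL
    have hdpos : (0:ℤ) < (d:ℤ) := by
      rcases Nat.eq_zero_or_pos d with h | h
      · exfalso; rw [h] at hdm; simp at hdm; omega
      · exact_mod_cast h
    obtain ⟨t, ht⟩ := hdL
    have : m / (d:ℤ) = t * k := by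
      have h1 : m = (d:ℤ) * (t * k) := by
        rw [hk]; push_cast [ht]; ring
      rw [h1, Int.mul_ediv_cancel_left _ hdpos.ne']
    rw [this]; exact Dvd.intro_left t rfl
  have hk0 : k ∣ a0 := (key d0 h0d (Nat.dvd_lcm_left _ _)).trans h0c
  have hk1 : k ∣ a1 :=
    (key d1 h1d ((Nat.dvd_lcm_left _ _).trans (Nat.dvd_lcm_right _ _))).trans h1c
  have hk2 : k ∣ a2 :=
    (key d2 h2d ((Nat.dvd_lcm_right _ _).trans (Nat.dvd_lcm_right _ _))).trans h2c
  have : k ∣ 1 := by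
    have := Int.dvd_coe_gcd (Int.dvd_coe_gcd hk0 hk1) hk2
    rwa [hg, Nat.cast_one] at this
  have hk1' : k = 1 := Int.eq_one_of_dvd_one hkpos.le this
  rw [hk, hk1', mul_one]

/-- Heights of rational points of `𝐒¹_III`.  Let `p, q` be coprime integers, not both
zero, and `m = p² − pq + q²`.  Then `gcd(pq, q²−pq, p²−pq) = 1`, `m ≥ 1`, and the
point `(pq/m, (q²−pq)/m, (p²−pq)/m)` is a rational point of `𝐒¹_III` of height `m`. -/
theorem height_S1III_point (p q : ℤ) (hco : IsCoprime p q) (hne : ¬(p = 0 ∧ q = 0))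
    (m : ℤ) (hm : m = p ^ 2 - p * q + q ^ 2) :
    Int.gcd (Int.gcd (p * q) (q ^ 2 - p * q)) (p ^ 2 - p * q) = 1 ∧
    1 ≤ m ∧
    ∀ v : EuclideanSpace ℝ (Fin 3),
      v 0 = ((p * q : ℤ) : ℝ) / (m : ℝ) →
      v 1 = ((q ^ 2 - p * q : ℤ) : ℝ) / (m : ℝ) →
      v 2 = ((p ^ 2 - p * q : ℤ) : ℝ) / (m : ℝ) →
      v ∈ S1III ∩ ratPts 3 ∧ heightVec v = (m : ℝ) := by
  -- positivity of m
  have hmpos : 0 < m := by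
    rcases not_and_or.mp hne with h | h
    · have hp : 1 ≤ |p| := Int.one_le_abs h
      nlinarith [sq_abs p, sq_nonneg (p - 2*q), sq_nonneg q]
    · have hq : 1 ≤ |q| := Int.one_le_abs h
      nlinarith [sq_abs q, sq_nonneg (2*p - q), sq_nonneg p]
  -- the gcd claim
  have hgcd : Int.gcd (Int.gcd (p * q) (q ^ 2 - p * q)) (p ^ 2 - p * q) = 1 := by
    set g : ℕ := Int.gcd (Int.gcd (p * q) (q ^ 2 - p * q)) (p ^ 2 - p * q) with hg
    have hA : (g:ℤ) ∣ p * q := (Int.gcd_dvd_left _ _).trans (Int.gcd_dvd_left _ _)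
    have hB : (g:ℤ) ∣ q ^ 2 - p * q := (Int.gcd_dvd_left _ _).trans (Int.gcd_dvd_right _ _)
    have hC : (g:ℤ) ∣ p ^ 2 - p * q := Int.gcd_dvd_right _ _
    have hq2 : (g:ℤ) ∣ q ^ 2 := by
      have := dvd_add hA hB; have e : q ^ 2 = p * q + (q ^ 2 - p * q) := by ring
      rw [e]; exact this
    have hp2 : (g:ℤ) ∣ p ^ 2 := by
      have := dvd_add hA hC; have e : p ^ 2 = p * q + (p ^ 2 - p * q) := by ring
      rw [e]; exact this
    have h2 : Int.gcd (p ^ 2) (q ^ 2) = 1 :=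
      Int.isCoprime_iff_gcd_eq_one.mp (hco.pow)
    have : (g:ℤ) ∣ 1 := by
      have := Int.dvd_coe_gcd hp2 hq2
      rwa [h2, Nat.cast_one] at this
    exact Nat.dvd_one.mp (by exact_mod_cast this)
  refine ⟨hgcd, hmpos, ?_⟩
  intro v hv0 hv1 hv2
  have hmR : (m : ℝ) ≠ 0 := by exact_mod_cast hmpos.ne'
  have hmQ : ((m:ℤ) : ℚ) ≠ 0 := by exact_mod_cast hmpos.ne'
  -- the three rational coordinates
  set r0 : ℚ := ((p * q : ℤ) : ℚ) / ((m : ℤ) : ℚ) with hr0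
  set r1 : ℚ := ((q ^ 2 - p * q : ℤ) : ℚ) / ((m : ℤ) : ℚ) with hr1
  set r2 : ℚ := ((p ^ 2 - p * q : ℤ) : ℚ) / ((m : ℤ) : ℚ) with hr2
  have hv0' : v 0 = (r0 : ℝ) := by rw [hv0, hr0]; push_cast; ring
  have hv1' : v 1 = (r1 : ℝ) := by rw [hv1, hr1]; push_cast; ring
  have hv2' : v 2 = (r2 : ℝ) := by rw [hv2, hr2]; push_cast; ring
  have hrat : ∀ i, ∃ t : ℚ, v i = (t : ℝ) := by
    intro i
    fin_cases i
    · exact ⟨r0, hv0'⟩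
    · exact ⟨r1, hv1'⟩
    · exact ⟨r2, hv2'⟩
  constructor
  · constructor
    · constructor
      · rw [hv0, hv1, hv2]
        field_simp
        rw [hm]; push_cast; ring
      · rw [hv0, hv1, hv2]
        field_simp
        rw [hm]; push_cast; ring
    · exact hrat
  · -- height computation
    rw [heightVec, dif_pos hrat]
    have e0 : (hrat 0).choose = r0 := by
      have h : (r0 : ℝ) = ((hrat 0).choose : ℝ) := hv0'.symm.trans (hrat 0).choose_spec
      exact_mod_cast h.symm
    have e1 : (hrat 1).choose = r1 := by
      have h : (r1 : ℝ) = ((hrat 1).choose : ℝ) := hv1'.symm.trans (hrat 1).choose_spec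
      exact_mod_cast h.symm
    have e2 : (hrat 2).choose = r2 := by
      have h : (r2 : ℝ) = ((hrat 2).choose : ℝ) := hv2'.symm.trans (hrat 2).choose_spec
      exact_mod_cast h.symm
    have huniv : (Finset.univ : Finset (Fin 3)) = {0, 1, 2} := by decide
    rw [huniv]
    simp only [Finset.lcm_insert, Finset.lcm_singleton, e0, e1, e2]
    have := lcm_dens (p * q) (q ^ 2 - p * q) (p ^ 2 - p * q) m hmpos hgcd
    rw [hr0, hr1, hr2]
    simp only [normalize_eq, lcm_eq_nat_lcm, hr0, hr1, hr2]
    exact_mod_cast congrArg (fun z : ℤ => (z : ℝ)) this
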